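/- Gradient noise formula for τ-partition nice sampling (Lemma 1): for every x ∈ ℝ^d, Σ_{j=1}^K q_{C_j} · binom(n_{C_j},τ)^{-1} Σ_{S⊆C_j, |S|=τ} ‖(1/n) Σ_{i∈S} (n_{C_j}/(q_{C_j}τ)) ∇f_i(x)‖² = (1/(n²τ)) Σ_{j=1}^K [n_{C_j}²/(q_{C_j}(n_{C_j}−1))] · ((τ−1)·n_{C_j}·h_{C_j}(x) + (n_{C_j}−τ)·h̄_{C_j}(x)), where h_{C_j}(x) := ‖(1/n_{C_j}) Σ_{i∈C_j} ∇f_i(x)‖² and h̄_{C_j}(x) := (1/n_{C_j}) Σ_{i∈C_j} ‖∇f_i(x)‖². -/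

import Mathlib

open Finset

section Aux

variable {α : Type*} [DecidableEq α]

/-- Number of `τ`-subsets of `C` containing a fixed subset `T`. -/
lemma count_subsets (C T : Finset α) (hT : T ⊆ C) {τ : ℕ} (h : T.card ≤ τ) :
    ((C.powersetCard τ).filter (fun S => T ⊆ S)).card
      = (C.card - T.card).choose (τ - T.card) := by
  have hr : (C.card - T.card).choose (τ - T.card)
      = ((C \ T).powersetCard (τ - T.card)).card := by
    rw [Finset.card_powersetCard, Finset.card_sdiff_of_subset hT]
  rw [hr]
  apply Finset.card_nbij' (fun S => S \ T) (fun S => S ∪ T)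
  · intro S hS
    simp only [Finset.mem_coe, Finset.mem_filter, Finset.mem_powersetCard] at hS ⊢
    obtain ⟨⟨hSC, hScard⟩, hTS⟩ := hS
    exact ⟨Finset.sdiff_subset_sdiff hSC Finset.Subset.rfl,
      by rw [Finset.card_sdiff_of_subset hTS, hScard]⟩
  · intro S hS
    simp only [Finset.mem_coe, Finset.mem_powersetCard, Finset.mem_filter] at hS ⊢
    obtain ⟨hSC, hScard⟩ := hS
    have hdisj : Disjoint S T :=
      Finset.disjoint_of_subset_left hSC Finset.sdiff_disjoint
    refine ⟨⟨Finset.union_subset (hSC.trans (Finset.sdiff_subset)) hT, ?_⟩,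
      Finset.subset_union_right⟩
    rw [Finset.card_union_of_disjoint hdisj, hScard, Nat.sub_add_cancel h]
  · intro S hS
    simp only [Finset.mem_coe, Finset.mem_filter] at hS
    exact Finset.sdiff_union_of_subset hS.2
  · intro S hS
    simp only [Finset.mem_coe, Finset.mem_powersetCard] at hS
    exact Finset.union_sdiff_cancel_right
      (Finset.disjoint_of_subset_left hS.1 Finset.sdiff_disjoint)

lemma count_one (C : Finset α) {i : α} (hi : i ∈ C) {τ : ℕ} (h : 1 ≤ τ) :
    ((C.powersetCard τ).filter (fun S => i ∈ S)).card
      = (C.card - 1).choose (τ - 1) := by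
  have := count_subsets C {i} (by simpa using hi) (by simpa using h)
  simpa [Finset.singleton_subset_iff] using this

lemma count_pair (C : Finset α) {i i' : α} (hi : i ∈ C) (hi' : i' ∈ C)
    (hne : i ≠ i') {τ : ℕ} (h : 2 ≤ τ) :
    ((C.powersetCard τ).filter (fun S => i ∈ S ∧ i' ∈ S)).card
      = (C.card - 2).choose (τ - 2) := by
  have hTcard : ({i, i'} : Finset α).card = 2 := by
    rw [Finset.card_insert_of_notMem (by simpa using hne), Finset.card_singleton]
  have := count_subsets C {i, i'}
    (Finset.insert_subset hi (by simpa using hi')) (τ := τ) (hTcard ▸ h)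
  rw [hTcard] at this
  rw [← this]
  congr 1
  apply Finset.filter_congr
  intro S _
  simp [Finset.insert_subset_iff, and_comm]

lemma count_pair_one (C : Finset α) {i i' : α} (hne : i ≠ i') {τ : ℕ} (h : τ = 1) :
    ((C.powersetCard τ).filter (fun S => i ∈ S ∧ i' ∈ S)).card = 0 := by
  rw [Finset.card_eq_zero, Finset.filter_eq_empty_iff]
  rintro S hS ⟨h1, h2⟩
  rw [Finset.mem_powersetCard] at hS
  have hsub : ({i, i'} : Finset α) ⊆ S := Finset.insert_subset h1 (by simpa using h2)
  have : ({i, i'} : Finset α).card ≤ S.card := Finset.card_le_card hsub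
  rw [Finset.card_insert_of_notMem (by simpa using hne), Finset.card_singleton,
    hS.2, h] at this
  omega

variable {E : Type*} [NormedAddCommGroup E] [InnerProductSpace ℝ E]

/-- Combinatorial core: the sum of `‖∑_{i ∈ S} v i‖²` over all `τ`-subsets `S` of `C`. -/
lemma sum_powersetCard_normsq (C : Finset α) (v : α → E) {τ B : ℕ}
    (hB : ∀ i ∈ C, ∀ i' ∈ C, i ≠ i' →
      ((C.powersetCard τ).filter (fun S => i ∈ S ∧ i' ∈ S)).card = B)
    (hτ1 : 1 ≤ τ) :
    ∑ S ∈ C.powersetCard τ, ‖∑ i ∈ S, v i‖ ^ 2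
      = (((C.card - 1).choose (τ - 1) : ℝ) - (B : ℝ)) * ∑ i ∈ C, ‖v i‖ ^ 2
        + (B : ℝ) * ‖∑ i ∈ C, v i‖ ^ 2 := by
  have step1 : ∑ S ∈ C.powersetCard τ, ‖∑ i ∈ S, v i‖ ^ 2
      = ∑ i ∈ C, ∑ i' ∈ C,
          (((C.powersetCard τ).filter (fun S => i ∈ S ∧ i' ∈ S)).card : ℝ) *
            (inner ℝ (v i) (v i') : ℝ) := by
    have h1 : ∀ S ∈ C.powersetCard τ, ‖∑ i ∈ S, v i‖ ^ 2
        = ∑ i ∈ C, ∑ i' ∈ C,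
            (if i ∈ S ∧ i' ∈ S then (inner ℝ (v i) (v i') : ℝ) else 0) := by
      intro S hS
      rw [Finset.mem_powersetCard] at hS
      have hinner : ‖∑ i ∈ S, v i‖ ^ 2
          = ∑ i ∈ S, ∑ i' ∈ S, (inner ℝ (v i) (v i') : ℝ) := by
        rw [← real_inner_self_eq_norm_sq, sum_inner]
        exact Finset.sum_congr rfl fun i _ => inner_sum _ _ _
      rw [hinner]
      have h2 : ∀ i : α, (∑ i' ∈ C, (if i ∈ S ∧ i' ∈ S then (inner ℝ (v i) (v i') : ℝ) else 0))
          = if i ∈ S then ∑ i' ∈ S, (inner ℝ (v i) (v i') : ℝ) else 0 := by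
        intro i
        by_cases h : i ∈ S
        · simp only [h, true_and, if_true]
          rw [Finset.sum_ite_mem, Finset.inter_eq_right.mpr hS.1]
        · simp [h]
      rw [Finset.sum_congr rfl fun i _ => h2 i, Finset.sum_ite_mem,
        Finset.inter_eq_right.mpr hS.1]
    rw [Finset.sum_congr rfl h1, Finset.sum_comm]
    refine Finset.sum_congr rfl fun i _ => ?_
    rw [Finset.sum_comm]
    refine Finset.sum_congr rfl fun i' _ => ?_
    rw [← Finset.sum_filter, Finset.sum_const, nsmul_eq_mul]
  rw [step1]
  have hA : ∀ i ∈ C,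
      (((C.powersetCard τ).filter (fun S => i ∈ S ∧ i ∈ S)).card : ℝ)
        = ((C.card - 1).choose (τ - 1) : ℝ) := by
    intro i hi
    have : ((C.powersetCard τ).filter (fun S => i ∈ S ∧ i ∈ S)).card
        = ((C.powersetCard τ).filter (fun S => i ∈ S)).card := by
      congr 1; apply Finset.filter_congr; intro S _; simp
    rw [this, count_one C hi hτ1]
  have step2 : ∑ i ∈ C, ∑ i' ∈ C,
        (((C.powersetCard τ).filter (fun S => i ∈ S ∧ i' ∈ S)).card : ℝ) *
          (inner ℝ (v i) (v i') : ℝ)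
      = ∑ i ∈ C, ((((C.card - 1).choose (τ - 1) : ℝ)) * (inner ℝ (v i) (v i) : ℝ)
          + ∑ i' ∈ C.erase i, (B : ℝ) * (inner ℝ (v i) (v i') : ℝ)) := by
    refine Finset.sum_congr rfl fun i hi => ?_
    rw [← Finset.add_sum_erase _ _ hi, hA i hi]
    congr 1
    refine Finset.sum_congr rfl fun i' hi' => ?_
    rw [hB i hi i' (Finset.mem_of_mem_erase hi') (Finset.ne_of_mem_erase hi').symm]
  rw [step2]
  have hdiag : ∀ i : α, (inner ℝ (v i) (v i) : ℝ) = ‖v i‖ ^ 2 := fun i =>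
    real_inner_self_eq_norm_sq _
  have hsum : ∑ i ∈ C, ∑ i' ∈ C.erase i, (inner ℝ (v i) (v i') : ℝ)
      = ‖∑ i ∈ C, v i‖ ^ 2 - ∑ i ∈ C, ‖v i‖ ^ 2 := by
    have : ∀ i ∈ C, ∑ i' ∈ C.erase i, (inner ℝ (v i) (v i') : ℝ)
        = (∑ i' ∈ C, (inner ℝ (v i) (v i') : ℝ)) - (inner ℝ (v i) (v i) : ℝ) := by
      intro i hi
      rw [← Finset.add_sum_erase _ _ hi]; ring
    rw [Finset.sum_congr rfl this, Finset.sum_sub_distrib]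
    congr 1
    · rw [← real_inner_self_eq_norm_sq, sum_inner]
      exact Finset.sum_congr rfl fun i _ => (inner_sum _ _ _).symm
    · exact Finset.sum_congr rfl fun i _ => hdiag i
  rw [Finset.sum_add_distrib]
  simp only [← Finset.mul_sum, hdiag]
  rw [hsum]
  ring

end Aux

set_option maxHeartbeats 1000000 in
/-- Gradient noise formula for τ-partition nice sampling (Lemma 1). -/
theorem stmt4 {d n K : ℕ} (hn : 1 ≤ n) (hK : 0 < K)
    (f : Fin n → EuclideanSpace ℝ (Fin d) → ℝ)
    (g : Fin n → EuclideanSpace ℝ (Fin d) → EuclideanSpace ℝ (Fin d))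
    (hgrad : ∀ i x, HasGradientAt (f i) (g i x) x)
    (C : Fin K → Finset (Fin n))
    (hpart : ∀ i : Fin n, ∃! j, i ∈ C j)
    (hcard : ∀ j, 2 ≤ (C j).card)
    (q : Fin K → ℝ) (hq : ∀ j, 0 < q j) (hqsum : ∑ j, q j = 1)
    (τ : ℕ) (hτ1 : 1 ≤ τ) (hτ : ∀ j, τ ≤ (C j).card)
    (x : EuclideanSpace ℝ (Fin d)) :
    ∑ j, q j * ((C j).card.choose τ : ℝ)⁻¹ *
        ∑ S ∈ (C j).powersetCard τ,
          ‖(n : ℝ)⁻¹ • ∑ i ∈ S, (((C j).card : ℝ) / (q j * (τ : ℝ))) • g i x‖ ^ 2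
      = ((n : ℝ) ^ 2 * (τ : ℝ))⁻¹ *
          ∑ j, ((C j).card : ℝ) ^ 2 / (q j * (((C j).card : ℝ) - 1)) *
            (((τ : ℝ) - 1) * ((C j).card : ℝ) *
                ‖((C j).card : ℝ)⁻¹ • ∑ i ∈ C j, g i x‖ ^ 2 +
              (((C j).card : ℝ) - (τ : ℝ)) *
                (((C j).card : ℝ)⁻¹ * ∑ i ∈ C j, ‖g i x‖ ^ 2)) := by
  rw [Finset.mul_sum]
  refine Finset.sum_congr rfl fun j _ => ?_
  set m : ℕ := (C j).card with hm
  -- the pair count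
  set B : ℕ := if 2 ≤ τ then (m - 2).choose (τ - 2) else 0 with hBdef
  have hm2 : 2 ≤ m := hcard j
  have hτm : τ ≤ m := hτ j
  have hBcount : ∀ i ∈ C j, ∀ i' ∈ C j, i ≠ i' →
      (((C j).powersetCard τ).filter (fun S => i ∈ S ∧ i' ∈ S)).card = B := by
    intro i hi i' hi' hne
    rcases le_or_gt 2 τ with h2 | h2
    · rw [hBdef, if_pos h2]; exact count_pair (C j) hi hi' hne h2
    · have hτeq : τ = 1 := by omega
      rw [hBdef, if_neg (by omega)]
      exact count_pair_one (C j) hne hτeq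
  -- key combinatorial identity
  have key := sum_powersetCard_normsq (C j) (fun i => g i x) hBcount hτ1
  -- pull scalars out of the norm
  have hscal : ∀ S ∈ (C j).powersetCard τ,
      ‖(n : ℝ)⁻¹ • ∑ i ∈ S, ((m : ℝ) / (q j * (τ : ℝ))) • g i x‖ ^ 2
        = ((n : ℝ)⁻¹) ^ 2 * ((m : ℝ) / (q j * (τ : ℝ))) ^ 2 *
            ‖∑ i ∈ S, g i x‖ ^ 2 := by
    intro S _
    rw [← Finset.smul_sum, norm_smul, norm_smul, norm_inv]
    rw [Real.norm_natCast, Real.norm_eq_abs]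
    rw [mul_pow, mul_pow, sq_abs]
    ring
  rw [Finset.sum_congr rfl hscal, ← Finset.mul_sum, key]
  -- now a pure real-number identity
  have hn0 : (n : ℝ) ≠ 0 := by positivity
  have hτ0 : (τ : ℝ) ≠ 0 := by positivity
  have hq0 : q j ≠ 0 := ne_of_gt (hq j)
  have hm0 : (m : ℝ) ≠ 0 := by positivity
  have hm1 : (m : ℝ) - 1 ≠ 0 := by
    have : (2 : ℝ) ≤ (m : ℝ) := by exact_mod_cast hm2
    linarith
  have hC0 : ((m.choose τ : ℕ) : ℝ) ≠ 0 := by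
    have := Nat.choose_pos hτm
    positivity
  -- Nat identities cast to ℝ
  have hmA : (m : ℝ) * (((m - 1).choose (τ - 1) : ℕ) : ℝ)
      = (τ : ℝ) * ((m.choose τ : ℕ) : ℝ) := by
    have h := Nat.add_one_mul_choose_eq (m - 1) (τ - 1)
    rw [Nat.sub_add_cancel (by omega),
      Nat.sub_add_cancel hτ1] at h
    exact_mod_cast h.trans (mul_comm _ _)
  have hmB : ((m : ℝ) - 1) * (B : ℝ)
      = ((τ : ℝ) - 1) * (((m - 1).choose (τ - 1) : ℕ) : ℝ) := by
    rcases le_or_gt 2 τ with h2 | h2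
    · rw [hBdef, if_pos h2]
      have h := Nat.add_one_mul_choose_eq (m - 2) (τ - 2)
      have e1 : m - 2 + 1 = m - 1 := by omega
      have e2 : τ - 2 + 1 = τ - 1 := by omega
      rw [e1, e2] at h
      have h' : (((m - 1 : ℕ) : ℝ)) * (((m - 2).choose (τ - 2) : ℕ) : ℝ)
          = (((m - 1).choose (τ - 1) : ℕ) : ℝ) * (((τ - 1 : ℕ) : ℝ)) := by
        exact_mod_cast h
      rw [Nat.cast_sub (by omega), Nat.cast_sub hτ1] at h'
      push_cast at h' ⊢
      linarith [h']
    · have hτeq : τ = 1 := by omega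
      rw [hBdef, if_neg (by omega), hτeq]
      simp
  -- norm of the averaged sum
  have havg : ‖((m : ℝ))⁻¹ • ∑ i ∈ C j, g i x‖ ^ 2
      = ((m : ℝ))⁻¹ ^ 2 * ‖∑ i ∈ C j, g i x‖ ^ 2 := by
    rw [norm_smul, norm_inv, Real.norm_natCast, mul_pow, inv_pow]
  rw [havg]
  set A : ℝ := (((m - 1).choose (τ - 1) : ℕ) : ℝ) with hAdef
  set Ch : ℝ := ((m.choose τ : ℕ) : ℝ) with hChdef
  set G : ℝ := ‖∑ i ∈ C j, g i x‖ ^ 2 with hGdef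
  set H : ℝ := ∑ i ∈ C j, ‖g i x‖ ^ 2 with hHdef
  have hA' : A = (τ : ℝ) * Ch / (m : ℝ) := by
    rw [eq_div_iff hm0]; linarith [hmA]
  have hB' : (B : ℝ) = ((τ : ℝ) - 1) * A / ((m : ℝ) - 1) := by
    rw [eq_div_iff hm1]; linarith [hmB]
  rw [hB', hA']
  field_simp
  ring
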